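/- (Ranged dwell-time.) Let 0 < T_min ≤ T_max < ∞ and let A, J be real n×n matrices. Suppose there exists a real symmetric positive definite n×n matrix P such that ℐ(P,A,J,θ) is negative definite for every θ ∈ [T_min, T_max]. Then there exists ρ ∈ [0,1) such that Jᵀ·exp(θ·Aᵀ)·P·exp(θ·A)·J ⪯ ρ·P for all θ ∈ [T_min, T_max], and consequently for every sequence (T_k)_{k∈ℕ} with T_k ∈ [T_min, T_max] for all k and every x₀ ∈ ℝⁿ, the sequence defined by x_{k+1} = exp(T_k·A)·J·x_k, x_0 = x₀, satisfies x_kᵀP x_k ≤ ρᵏ·x₀ᵀP x₀ for all k, and hence x_k → 0 as k → ∞. -/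

import Mathlib

open Matrix Filter

/-- Matrix exponential of a real square matrix. -/
noncomputable def mexp {n : ℕ} (A : Matrix (Fin n) (Fin n) ℝ) : Matrix (Fin n) (Fin n) ℝ :=
  NormedSpace.exp A

/-- ℐ(P,A,J,T) := Jᵀ·exp(T·Aᵀ)·P·exp(T·A)·J − P. -/
noncomputable def scrI {n : ℕ} (P A J : Matrix (Fin n) (Fin n) ℝ) (T : ℝ) :
    Matrix (Fin n) (Fin n) ℝ :=
  Jᵀ * mexp (T • Aᵀ) * P * mexp (T • A) * J - P

/-- xᵀMx < 0 for all x ≠ 0. -/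
def negDef {m : Type*} [Fintype m] (M : Matrix m m ℝ) : Prop :=
  ∀ x : m → ℝ, x ≠ 0 → x ⬝ᵥ M.mulVec x < 0

/-- xᵀMx > 0 for all x ≠ 0. -/
def posDef {m : Type*} [Fintype m] (M : Matrix m m ℝ) : Prop :=
  ∀ x : m → ℝ, x ≠ 0 → 0 < x ⬝ᵥ M.mulVec x

/-- xᵀMx ≥ 0 for all x. -/
def posSemidef {m : Type*} [Fintype m] (M : Matrix m m ℝ) : Prop :=
  ∀ x : m → ℝ, 0 ≤ x ⬝ᵥ M.mulVec x

lemma mexp_transpose {n : ℕ} (A : Matrix (Fin n) (Fin n) ℝ) (θ : ℝ) :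
    mexp (θ • Aᵀ) = (mexp (θ • A))ᵀ := by
  rw [mexp, mexp, ← Matrix.transpose_smul, Matrix.exp_transpose]

lemma continuous_mexp_smul {n : ℕ} (A : Matrix (Fin n) (Fin n) ℝ) :
    Continuous fun θ : ℝ => mexp (θ • A) := by
  letI : NormedRing (Matrix (Fin n) (Fin n) ℝ) := Matrix.linftyOpNormedRing
  letI : NormedAlgebra ℝ (Matrix (Fin n) (Fin n) ℝ) := Matrix.linftyOpNormedAlgebra
  let +nondep : NormedAlgebra ℚ (Matrix (Fin n) (Fin n) ℝ) := .restrictScalars ℚ ℝ _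
  exact NormedSpace.exp_continuous.comp (continuous_id.smul continuous_const)

lemma quad_smul {n : ℕ} (M : Matrix (Fin n) (Fin n) ℝ) (c : ℝ) (x : Fin n → ℝ) :
    (c • x) ⬝ᵥ M.mulVec (c • x) = c ^ 2 * (x ⬝ᵥ M.mulVec x) := by
  rw [Matrix.mulVec_smul, smul_dotProduct, dotProduct_smul]
  simp [smul_eq_mul]; ring

lemma quad_conj {n : ℕ} (P S : Matrix (Fin n) (Fin n) ℝ) (x : Fin n → ℝ) :
    x ⬝ᵥ (Sᵀ * P * S).mulVec x = (S.mulVec x) ⬝ᵥ P.mulVec (S.mulVec x) := by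
  simp only [← Matrix.mulVec_mulVec]
  rw [Matrix.dotProduct_mulVec, Matrix.vecMul_transpose]

/-- Ranged dwell-time: if `P ≻ 0` is symmetric and `ℐ(P,A,J,θ) ≺ 0` for all
`θ ∈ [T_min, T_max]`, then there is `ρ ∈ [0,1)` with
`Jᵀ·exp(θ·Aᵀ)·P·exp(θ·A)·J ⪯ ρ·P` on `[T_min, T_max]`, and every impulsive trajectory with
dwell-times in `[T_min, T_max]` satisfies `x_kᵀPx_k ≤ ρᵏ·x₀ᵀPx₀` and tends to `0`. -/
theorem stmt5 {n : ℕ} (Tmin Tmax : ℝ) (h1 : 0 < Tmin) (h2 : Tmin ≤ Tmax)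
    (A J : Matrix (Fin n) (Fin n) ℝ)
    (P : Matrix (Fin n) (Fin n) ℝ) (hPsym : P.IsSymm) (hP : posDef P)
    (hI : ∀ θ ∈ Set.Icc Tmin Tmax, negDef (scrI P A J θ)) :
    ∃ ρ : ℝ, 0 ≤ ρ ∧ ρ < 1 ∧
      (∀ θ ∈ Set.Icc Tmin Tmax,
        posSemidef (ρ • P - Jᵀ * mexp (θ • Aᵀ) * P * mexp (θ • A) * J)) ∧
      (∀ Tk : ℕ → ℝ, (∀ k, Tk k ∈ Set.Icc Tmin Tmax) →
        ∀ x₀ : Fin n → ℝ, ∀ x : ℕ → Fin n → ℝ, x 0 = x₀ →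
          (∀ k, x (k + 1) = (mexp (Tk k • A) * J).mulVec (x k)) →
          (∀ k, (x k) ⬝ᵥ P.mulVec (x k) ≤ ρ ^ k * (x₀ ⬝ᵥ P.mulVec x₀)) ∧
          Tendsto x atTop (nhds 0)) := by
  rcases Nat.eq_zero_or_pos n with hn | hn
  · -- degenerate case n = 0
    haveI : IsEmpty (Fin n) := by rw [hn]; infer_instance
    have hzero : ∀ (v w : Fin n → ℝ) (M : Matrix (Fin n) (Fin n) ℝ),
        v ⬝ᵥ M.mulVec w = 0 := by
      intro v w M; simp [dotProduct]
    refine ⟨0, le_refl 0, one_pos, ?_, ?_⟩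
    · intro θ _ x; rw [hzero]
    · intro Tk hTk x₀ x hx0 hrec
      have hx : ∀ k, x k = 0 := by
        intro k; funext i; exact (IsEmpty.false i).elim
      constructor
      · intro k; rw [hzero, hzero]; simp
      · have : x = fun _ => 0 := funext fun k => hx k
        rw [this]; exact tendsto_const_nhds
  -- main case
  haveI : Nonempty (Fin n) := ⟨⟨0, hn⟩⟩
  set Q : ℝ → Matrix (Fin n) (Fin n) ℝ :=
    fun θ => Jᵀ * mexp (θ • Aᵀ) * P * mexp (θ • A) * J with hQdef
  have hQconj : ∀ θ : ℝ, Q θ = (mexp (θ • A) * J)ᵀ * P * (mexp (θ • A) * J) := by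
    intro θ
    rw [hQdef]
    simp only [Matrix.transpose_mul, mexp_transpose]
    noncomm_ring
  have hPsd : ∀ v : Fin n → ℝ, 0 ≤ v ⬝ᵥ P.mulVec v := by
    intro v
    rcases eq_or_ne v 0 with rfl | hv
    · simp
    · exact (hP v hv).le
  have hQpsd : ∀ (θ : ℝ) (v : Fin n → ℝ), 0 ≤ v ⬝ᵥ (Q θ).mulVec v := by
    intro θ v
    rw [hQconj, quad_conj]
    exact hPsd _
  have hscrI_eq : ∀ (θ : ℝ) (v : Fin n → ℝ),
      v ⬝ᵥ (scrI P A J θ).mulVec v = v ⬝ᵥ (Q θ).mulVec v - v ⬝ᵥ P.mulVec v := by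
    intro θ v
    rw [scrI, Matrix.sub_mulVec, dotProduct_sub]
  -- sphere and extrema of quadratic form of P
  set S : Set (Fin n → ℝ) := Metric.sphere 0 1 with hSdef
  have hScpt : IsCompact S := isCompact_sphere 0 1
  have hSne : S.Nonempty := NormedSpace.sphere_nonempty.mpr zero_le_one
  have hqP : Continuous fun x : Fin n → ℝ => x ⬝ᵥ P.mulVec x :=
    continuous_id.dotProduct
      ((continuous_const : Continuous fun _ : Fin n → ℝ => P).matrix_mulVec continuous_id)
  obtain ⟨xm, hxmS, hxm⟩ := hScpt.exists_isMinOn hSne hqP.continuousOn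
  obtain ⟨xM, hxMS, hxM⟩ := hScpt.exists_isMaxOn hSne hqP.continuousOn
  set m := xm ⬝ᵥ P.mulVec xm with hmdef
  set C := xM ⬝ᵥ P.mulVec xM with hCdef
  have hxmne : xm ≠ 0 := by
    intro h; rw [h, hSdef, mem_sphere_zero_iff_norm] at hxmS; simp at hxmS
  have hm : 0 < m := hP xm hxmne
  have hmC : m ≤ C := hxM hxmS
  have hC : 0 < C := lt_of_lt_of_le hm hmC
  -- maximum of the scrI quadratic form on Icc × S
  have hg : Continuous fun p : ℝ × (Fin n → ℝ) => p.2 ⬝ᵥ (scrI P A J p.1).mulVec p.2 := by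
    have hM : Continuous fun θ : ℝ => scrI P A J θ := by
      unfold scrI
      exact ((((continuous_const.matrix_mul (continuous_mexp_smul Aᵀ)).matrix_mul
        continuous_const).matrix_mul (continuous_mexp_smul A)).matrix_mul
        continuous_const).sub continuous_const
    exact continuous_snd.dotProduct
      ((hM.comp continuous_fst).matrix_mulVec continuous_snd)
  have hKc : IsCompact (Set.Icc Tmin Tmax ×ˢ S) := isCompact_Icc.prod hScpt
  have hKne : (Set.Icc Tmin Tmax ×ˢ S).Nonempty :=
    ⟨(Tmin, hSne.choose), Set.mk_mem_prod ⟨le_refl _, h2⟩ hSne.choose_spec⟩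
  obtain ⟨⟨θ₀, y₀⟩, h0K, hmax⟩ := hKc.exists_isMaxOn hKne hg.continuousOn
  set ε := -(y₀ ⬝ᵥ (scrI P A J θ₀).mulVec y₀) with hεdef
  have hy₀ne : y₀ ≠ 0 := by
    have := h0K.2
    intro h; rw [h, hSdef, mem_sphere_zero_iff_norm] at this; simp at this
  have hεpos : 0 < ε := by
    have := hI θ₀ h0K.1 y₀ hy₀ne
    simp only [hεdef]; linarith
  have hbd : ∀ θ ∈ Set.Icc Tmin Tmax, ∀ y ∈ S,
      y ⬝ᵥ (scrI P A J θ).mulVec y ≤ -ε := by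
    intro θ hθ y hy
    have := hmax (Set.mk_mem_prod hθ hy)
    simpa [hεdef] using this
  have hεC : ε ≤ C := by
    have h := hbd Tmin ⟨le_refl _, h2⟩ xM hxMS
    rw [hscrI_eq] at h
    have := hQpsd Tmin xM
    rw [← hCdef] at h
    linarith
  set ρ := 1 - ε / C with hρdef
  have hρ0 : 0 ≤ ρ := by
    rw [hρdef]
    have : ε / C ≤ 1 := (div_le_one hC).mpr hεC
    linarith
  have hρ1 : ρ < 1 := by
    rw [hρdef]
    have : 0 < ε / C := div_pos hεpos hC
    linarith
  clear_value m C ε ρ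
  -- decomposition of nonzero vectors over the sphere
  have hsphere : ∀ v : Fin n → ℝ, v ≠ 0 → ∃ y ∈ S,
      ∀ M : Matrix (Fin n) (Fin n) ℝ,
        v ⬝ᵥ M.mulVec v = ‖v‖ ^ 2 * (y ⬝ᵥ M.mulVec y) := by
    intro v hv
    have hc : ‖v‖ ≠ 0 := norm_ne_zero_iff.mpr hv
    refine ⟨‖v‖⁻¹ • v, ?_, ?_⟩
    · rw [hSdef, mem_sphere_zero_iff_norm]
      exact norm_smul_inv_norm hv
    · intro M
      have hvy : v = ‖v‖ • (‖v‖⁻¹ • v) := by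
        rw [smul_smul, mul_inv_cancel₀ hc, one_smul]
      conv_lhs => rw [hvy]
      rw [quad_smul]
  -- key inequality
  have key : ∀ θ ∈ Set.Icc Tmin Tmax, ∀ v : Fin n → ℝ,
      v ⬝ᵥ (Q θ).mulVec v ≤ ρ * (v ⬝ᵥ P.mulVec v) := by
    intro θ hθ v
    rcases eq_or_ne v 0 with rfl | hv
    · simp
    · obtain ⟨y, hyS, hy⟩ := hsphere v hv
      have h1 : y ⬝ᵥ (scrI P A J θ).mulVec y ≤ -ε := hbd θ hθ y hyS
      rw [hscrI_eq] at h1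
      have hPyC : y ⬝ᵥ P.mulVec y ≤ C := by rw [hCdef]; exact hxM hyS
      have h3 : ε / C * (y ⬝ᵥ P.mulVec y) ≤ ε / C * C :=
        mul_le_mul_of_nonneg_left hPyC (div_nonneg hεpos.le hC.le)
      rw [div_mul_cancel₀ _ hC.ne'] at h3
      have hρexp : ρ * (y ⬝ᵥ P.mulVec y)
          = y ⬝ᵥ P.mulVec y - ε / C * (y ⬝ᵥ P.mulVec y) := by
        rw [hρdef]; ring
      have h2 : y ⬝ᵥ (Q θ).mulVec y ≤ ρ * (y ⬝ᵥ P.mulVec y) := by linarith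
      rw [hy (Q θ), hy P]
      calc ‖v‖ ^ 2 * (y ⬝ᵥ (Q θ).mulVec y)
          ≤ ‖v‖ ^ 2 * (ρ * (y ⬝ᵥ P.mulVec y)) :=
            mul_le_mul_of_nonneg_left h2 (sq_nonneg _)
        _ = ρ * (‖v‖ ^ 2 * (y ⬝ᵥ P.mulVec y)) := by ring
  refine ⟨ρ, hρ0, hρ1, ?_, ?_⟩
  · intro θ hθ v
    have h := key θ hθ v
    have heq : v ⬝ᵥ (ρ • P - Q θ).mulVec v
        = ρ * (v ⬝ᵥ P.mulVec v) - v ⬝ᵥ (Q θ).mulVec v := by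
      rw [Matrix.sub_mulVec, dotProduct_sub, Matrix.smul_mulVec,
        dotProduct_smul, smul_eq_mul]
    rw [show (ρ • P - Jᵀ * mexp (θ • Aᵀ) * P * mexp (θ • A) * J) = ρ • P - Q θ from rfl,
      heq]
    linarith
  · intro Tk hTk x₀ x hx0 hrec
    have hbound : ∀ k, x k ⬝ᵥ P.mulVec (x k) ≤ ρ ^ k * (x₀ ⬝ᵥ P.mulVec x₀) := by
      intro k
      induction k with
      | zero => simp [hx0]
      | succ k ih =>
        rw [hrec k]
        have hQeq : (mexp (Tk k • A) * J).mulVec (x k) ⬝ᵥ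
            P.mulVec ((mexp (Tk k • A) * J).mulVec (x k))
            = x k ⬝ᵥ (Q (Tk k)).mulVec (x k) := by
          rw [hQconj, quad_conj]
        rw [hQeq]
        calc x k ⬝ᵥ (Q (Tk k)).mulVec (x k)
            ≤ ρ * (x k ⬝ᵥ P.mulVec (x k)) := key _ (hTk k) _
          _ ≤ ρ * (ρ ^ k * (x₀ ⬝ᵥ P.mulVec x₀)) := mul_le_mul_of_nonneg_left ih hρ0
          _ = ρ ^ (k + 1) * (x₀ ⬝ᵥ P.mulVec x₀) := by ring
    refine ⟨hbound, ?_⟩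
    have hlow : ∀ v : Fin n → ℝ, m * ‖v‖ ^ 2 ≤ v ⬝ᵥ P.mulVec v := by
      intro v
      rcases eq_or_ne v 0 with rfl | hv
      · simp
      · obtain ⟨y, hyS, hy⟩ := hsphere v hv
        rw [hy P]
        have h4 : xm ⬝ᵥ P.mulVec xm ≤ y ⬝ᵥ P.mulVec y := hxm hyS
        rw [hmdef]
        nlinarith [sq_nonneg ‖v‖]
    have hnorm2 : ∀ k, ‖x k‖ ^ 2 ≤ ρ ^ k * (x₀ ⬝ᵥ P.mulVec x₀) / m := by
      intro k
      rw [le_div_iff₀ hm]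
      have := hlow (x k)
      have hb := hbound k
      nlinarith
    have ht : Tendsto (fun k : ℕ => ρ ^ k * (x₀ ⬝ᵥ P.mulVec x₀) / m) atTop (nhds 0) := by
      have h0 := tendsto_pow_atTop_nhds_zero_of_lt_one hρ0 hρ1
      have := (h0.mul_const (x₀ ⬝ᵥ P.mulVec x₀)).div_const m
      simpa using this
    have hsq : Tendsto (fun k => ‖x k‖ ^ 2) atTop (nhds 0) :=
      squeeze_zero (fun k => sq_nonneg _) hnorm2 ht
    have hnt : Tendsto (fun k => ‖x k‖) atTop (nhds 0) := by
      have hcomp := (Real.continuous_sqrt.tendsto 0).comp hsq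
      simpa [Function.comp_def, Real.sqrt_sq, norm_nonneg] using hcomp
    exact tendsto_zero_iff_norm_tendsto_zero.mpr hnt
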